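/- Let Φ be an irreducible reduced crystallographic simply-laced root system with base Δ and highest root θ. Let α ∈ Δ be an extreme simple root with neighbour β, and assume α is quasi-abelian, i.e. either abelian (c_α(θ) = 1) or a Heisenberg root. Then the subgroup W_{Δ∖{α,β}} of the Weyl group, generated by the simple reflections in the simple roots orthogonal to α, acts transitively on Φ_α = {ε ∈ Φ : c_α(ε) = 1 and ⟨ε,α⟩ = 0}. (Paper's Lemma: the Weyl group of the Levi M_α acts transitively on Φ_α.) -/
import Mathlib


open scoped InnerProductSpace

namespace PaperRS

variable {E : Type*} [NormedAddCommGroup E] [InnerProductSpace ℝ E]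

/-- A reduced crystallographic simply-laced root system, normalized so that every root has
squared length `2` (hence `⟪δ, ε⟫` is the Cartan integer `⟨δ, ε^∨⟩`). -/
structure IsRootSystem (Φ : Set E) : Prop where
  finite : Φ.Finite
  nonzero : (0 : E) ∉ Φ
  span_top : Submodule.span ℝ Φ = ⊤
  norm_two : ∀ α ∈ Φ, ⟪α, α⟫_ℝ = 2
  reduced : ∀ α ∈ Φ, ∀ t : ℝ, t • α ∈ Φ → t = 1 ∨ t = -1
  cartan_int : ∀ α ∈ Φ, ∀ β ∈ Φ, ∃ n : ℤ, ⟪α, β⟫_ℝ = (n : ℝ)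
  reflect_mem : ∀ α ∈ Φ, ∀ β ∈ Φ, β - ⟪β, α⟫_ℝ • α ∈ Φ

/-- Irreducibility: `Φ` is nonempty and cannot be split into two mutually orthogonal parts. -/
def IsIrreducible (Φ : Set E) : Prop :=
  Φ.Nonempty ∧ ∀ Φ₁ Φ₂ : Set E, Φ = Φ₁ ∪ Φ₂ →
    (∀ a ∈ Φ₁, ∀ b ∈ Φ₂, ⟪a, b⟫_ℝ = 0) → Φ₁ = ∅ ∨ Φ₂ = ∅

/-- The reflection in (the hyperplane orthogonal to) a root `α` of squared length `2`. -/
def sRefl (α : E) : Function.End E := fun x => x - ⟪x, α⟫_ℝ • α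

/-- The group generated by the reflections in the elements of `S`; since every reflection is
an involution, the submonoid generated by the reflections coincides with the generated group. -/
def genBy (S : Set E) : Submonoid (Function.End E) :=
  Submonoid.closure (sRefl '' S)

/-- The Weyl group of `Φ`: the group generated by the reflections in all the roots. -/
abbrev WeylGroup (Φ : Set E) : Submonoid (Function.End E) := genBy Φ

/-- A base (set of simple roots) of `Φ`, together with the (unique) integer coefficients
`coeff δ γ` of each root `δ` with respect to the simple roots. -/
structure Base (Φ : Set E) where
  Δ : Finset E
  coeff : E → E → ℤ
  subset : ↑Δ ⊆ Φ
  indep : LinearIndependent ℝ (fun γ : {x : E // x ∈ Δ} => (γ : E))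
  expand : ∀ δ ∈ Φ, δ = ∑ γ ∈ Δ, (coeff δ γ : ℝ) • γ
  sign : ∀ δ ∈ Φ, (∀ γ ∈ Δ, 0 ≤ coeff δ γ) ∨ (∀ γ ∈ Δ, coeff δ γ ≤ 0)

variable {Φ : Set E}

/-- `θ` is the highest root of `Φ` with respect to the base `B`. -/
def IsHighest (B : Base Φ) (θ : E) : Prop :=
  θ ∈ Φ ∧ ∀ δ ∈ Φ, ∀ γ ∈ B.Δ, B.coeff δ γ ≤ B.coeff θ γ

/-- `α` is a Heisenberg simple root: the highest root `θ` has `α`-coefficient `2`, and every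
root other than `±θ` has `α`-coefficient in `{-1, 0, 1}`. -/
def IsHeisenberg (B : Base Φ) (θ α : E) : Prop :=
  B.coeff θ α = 2 ∧
    ∀ δ ∈ Φ, δ ≠ θ → δ ≠ -θ →
      B.coeff δ α = -1 ∨ B.coeff δ α = 0 ∨ B.coeff δ α = 1

/-- `α` is an extreme simple root with (unique) neighbour `β`. -/
def IsExtreme (B : Base Φ) (α β : E) : Prop :=
  β ∈ B.Δ ∧ β ≠ α ∧ ⟪α, β⟫_ℝ ≠ 0 ∧
    ∀ γ ∈ B.Δ, γ ≠ α → ⟪α, γ⟫_ℝ ≠ 0 → γ = β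

/-- `Φ_α`: the roots with `α`-coefficient `1` that are orthogonal to `α`. -/
def PhiSet (B : Base Φ) (α : E) : Set E :=
  {ε ∈ Φ | B.coeff ε α = 1 ∧ ⟪ε, α⟫_ℝ = 0}

/-- `Ψ_α`: the roots `ε` with `α`-coefficient `1` and `⟪ε, α⟫ ≤ 0`. -/
def PsiSet (B : Base Φ) (α : E) : Set E :=
  {ε ∈ Φ | B.coeff ε α = 1 ∧ ⟪ε, α⟫_ℝ ≤ 0}

/-! ### Auxiliary lemmas -/

/-- Coefficients vanish if the combination is zero. -/
lemma Base.coeffs_zero (B : Base Φ) {c : E → ℝ} (hc : ∑ γ ∈ B.Δ, c γ • γ = 0) :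
    ∀ γ ∈ B.Δ, c γ = 0 := by
  have h' := linearIndependent_iff'.mp B.indep Finset.univ (fun x => c x)
  have h2 : ∑ i : {x : E // x ∈ B.Δ}, c i • (i : E) = 0 := by
    rw [← Finset.sum_attach B.Δ (fun x => c x • x)] at hc; exact hc
  intro γ hγ
  exact h' h2 ⟨γ, hγ⟩ (Finset.mem_univ _)

/-- Uniqueness of the expansion coefficients. -/
lemma coeff_unique (B : Base Φ) {δ : E} (hδ : δ ∈ Φ) (r : E → ℝ)
    (hr : δ = ∑ γ ∈ B.Δ, r γ • γ) : ∀ γ ∈ B.Δ, r γ = (B.coeff δ γ : ℝ) := by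
  have hc : ∑ γ ∈ B.Δ, (r γ - (B.coeff δ γ : ℝ)) • γ = 0 := by
    simp only [sub_smul, Finset.sum_sub_distrib, ← hr, ← B.expand δ hδ, sub_self]
  intro γ hγ
  have := B.coeffs_zero hc γ hγ
  linarith

open scoped Classical in
lemma coeff_simple (B : Base Φ) {γ : E} (hγ : γ ∈ B.Δ) {γ' : E} (hγ' : γ' ∈ B.Δ) :
    (B.coeff γ γ' : ℝ) = if γ' = γ then 1 else 0 := by
  classical
  have : γ = ∑ x ∈ B.Δ, (if x = γ then (1:ℝ) else 0) • x := by
    simp [ite_smul, Finset.sum_ite_eq' B.Δ γ, hγ]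
  exact (coeff_unique B (B.subset hγ) _ this γ' hγ').symm

/-- A root with `α`-coefficient `1` is not `±γ` for a simple root `γ ≠ α`. -/
lemma root_ne_simple (B : Base Φ) {ε γ α : E} (hε : ε ∈ Φ) (hγ : γ ∈ B.Δ) (hα : α ∈ B.Δ)
    (hγα : γ ≠ α) (hc : B.coeff ε α = 1) : ε ≠ γ ∧ ε ≠ -γ := by
  classical
  constructor
  · rintro rfl
    have := coeff_simple B hγ hα
    rw [if_neg (fun h => hγα h.symm)] at this
    rw [hc] at this; norm_num at this
  · intro h
    have hsum : ∑ x ∈ B.Δ, ((B.coeff ε x : ℝ) + if x = γ then 1 else 0) • x = 0 := by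
      simp only [add_smul, Finset.sum_add_distrib, ← B.expand ε hε]
      rw [show ∑ x ∈ B.Δ, (if x = γ then (1:ℝ) else 0) • x = (1:ℝ) • γ by
        simp [ite_smul, Finset.sum_ite_eq' B.Δ γ, hγ]]
      rw [h]; simp
    have := B.coeffs_zero hsum α hα
    rw [if_neg (fun h' => hγα h'.symm), hc] at this
    norm_num at this

/-- Cartan integers of non-proportional roots lie in `{-1,0,1}`. -/
lemma cartan_bound (hΦ : IsRootSystem Φ) {δ ε : E} (hδ : δ ∈ Φ) (hε : ε ∈ Φ)
    (h1 : ε ≠ δ) (h2 : ε ≠ -δ) :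
    ∃ n : ℤ, ⟪ε, δ⟫_ℝ = (n : ℝ) ∧ -1 ≤ n ∧ n ≤ 1 := by
  obtain ⟨n, hn⟩ := hΦ.cartan_int ε hε δ hδ
  have hεε := hΦ.norm_two ε hε
  have hδδ := hΦ.norm_two δ hδ
  have hpos : ∀ x : E, x ≠ 0 → 0 < ⟪x,x⟫_ℝ := by
    intro x hx
    exact lt_of_le_of_ne real_inner_self_nonneg
      (Ne.symm (fun hc => hx (inner_self_eq_zero.mp hc)))
  refine ⟨n, hn, ?_, ?_⟩
  · have hne : ε + δ ≠ 0 := fun h => h2 (by linear_combination (norm := module) h)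
    have h3 := hpos _ hne
    rw [real_inner_add_add_self, hεε, hδδ, hn] at h3
    have h4 : (-2 : ℝ) < (n : ℝ) := by linarith
    have h5 : (-2 : ℤ) < n := by exact_mod_cast h4
    omega
  · have hne : ε - δ ≠ 0 := fun h => h1 (by linear_combination (norm := module) h)
    have h3 := hpos _ hne
    rw [real_inner_sub_sub_self, hεε, hδδ, hn] at h3
    have h4 : (n : ℝ) < (2 : ℝ) := by linarith
    have h5 : (n : ℤ) < 2 := by exact_mod_cast h4
    omega

open scoped Classical in
/-- Reflecting a root in a simple root: membership and coefficient update. -/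
lemma coeff_reflect (hΦ : IsRootSystem Φ) (B : Base Φ) {ε γ : E} (hε : ε ∈ Φ)
    (hγΔ : γ ∈ B.Δ) (k : ℤ) (hk : ⟪ε, γ⟫_ℝ = (k : ℝ)) :
    ε - (k : ℝ) • γ ∈ Φ ∧
      ∀ γ' ∈ B.Δ, B.coeff (ε - (k : ℝ) • γ) γ' = B.coeff ε γ' - (if γ' = γ then k else 0) := by
  classical
  have hγΦ : γ ∈ Φ := B.subset hγΔ
  have hmem : ε - (k : ℝ) • γ ∈ Φ := by
    have := hΦ.reflect_mem γ hγΦ ε hε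
    rwa [hk] at this
  refine ⟨hmem, ?_⟩
  have hexp : ε - (k : ℝ) • γ
      = ∑ γ' ∈ B.Δ, ((B.coeff ε γ' : ℝ) - if γ' = γ then (k : ℝ) else 0) • γ' := by
    simp only [sub_smul, Finset.sum_sub_distrib, ← B.expand ε hε]
    rw [show ∑ x ∈ B.Δ, (if x = γ then (k:ℝ) else 0) • x = (k:ℝ) • γ by
      simp [ite_smul, Finset.sum_ite_eq' B.Δ γ, hγΔ]]
  intro γ' hγ'
  have h := coeff_unique B hmem _ hexp γ' hγ'
  have h2 : (B.coeff ε γ' : ℝ) - ((if γ' = γ then k else 0 : ℤ) : ℝ)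
      = (B.coeff (ε - (k : ℝ) • γ) γ' : ℝ) := by
    rw [← h]; congr 1
    split <;> simp
  exact_mod_cast h2.symm

lemma sRefl_mem_genBy {S : Set E} {γ : E} (hγ : γ ∈ S) : sRefl γ ∈ genBy S :=
  Submonoid.subset_closure ⟨γ, hγ, rfl⟩

lemma sRefl_invol {γ : E} (hγγ : ⟪γ, γ⟫_ℝ = 2) (x : E) : sRefl γ (sRefl γ x) = x := by
  simp only [sRefl, inner_sub_left, real_inner_smul_left, hγγ]
  module

/-- Sum of absolute coefficient differences strictly decreases. -/
lemma sum_natAbs_lt {s : Finset E} {γ : E} (hγ : γ ∈ s) (f g : E → ℤ)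
    (hoff : ∀ x ∈ s, x ≠ γ → g x = f x) (hg : (g γ).natAbs < (f γ).natAbs) :
    ∑ x ∈ s, (g x).natAbs < ∑ x ∈ s, (f x).natAbs := by
  classical
  rw [← Finset.add_sum_erase s (fun x => (g x).natAbs) hγ,
      ← Finset.add_sum_erase s (fun x => (f x).natAbs) hγ]
  have heq : ∑ x ∈ s.erase γ, (g x).natAbs = ∑ x ∈ s.erase γ, (f x).natAbs :=
    Finset.sum_congr rfl fun x hx => by
      rw [hoff x (Finset.mem_of_mem_erase hx) (Finset.ne_of_mem_erase hx)]
  omega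

/-- Main induction. -/
lemma main_induction (hΦ : IsRootSystem Φ) (B : Base Φ) {α β : E} (hα : α ∈ B.Δ)
    (hext : IsExtreme B α β) :
    ∀ n : ℕ, ∀ ε ε' : E, ε ∈ Φ → ε' ∈ Φ → B.coeff ε α = 1 → B.coeff ε' α = 1 →
      ⟪ε, α⟫_ℝ = 0 → ⟪ε', α⟫_ℝ = 0 →
      (∑ γ ∈ B.Δ, (B.coeff ε γ - B.coeff ε' γ).natAbs) = n →
      ∃ w ∈ genBy {γ : E | γ ∈ B.Δ ∧ ⟪γ, α⟫_ℝ = 0}, w ε = ε' := by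
  classical
  obtain ⟨hβΔ, hβα, hαβ, huniq⟩ := hext
  have horth : ∀ γ ∈ B.Δ, γ ≠ α → γ ≠ β → ⟪γ, α⟫_ℝ = 0 := by
    intro γ hγ h1 h2
    by_contra h
    exact h2 (huniq γ hγ h1 (by rwa [real_inner_comm] at h))
  intro n
  induction n using Nat.strong_induction_on with
  | _ n IH =>
  intro ε ε' hε hε' hcε hcε' hoε hoε' hsum
  by_cases h0 : ∀ γ ∈ B.Δ, B.coeff ε γ = B.coeff ε' γ
  · have heq : ε = ε' := by
      rw [B.expand ε hε, B.expand ε' hε']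
      exact Finset.sum_congr rfl fun γ hγ => by rw [h0 γ hγ]
    exact ⟨1, one_mem _, by simp [Function.End.one_def, heq]⟩
  -- set-up
  set d : E → ℤ := fun γ => B.coeff ε γ - B.coeff ε' γ with hd
  have hdα : d α = 0 := by simp [hd, hcε, hcε']
  have hδexp : ε - ε' = ∑ γ ∈ B.Δ, (d γ : ℝ) • γ := by
    rw [B.expand ε hε, B.expand ε' hε', ← Finset.sum_sub_distrib]
    refine Finset.sum_congr rfl fun γ hγ => ?_
    push_cast [hd, sub_smul]
    ring_nf
  have hdβ : d β = 0 := by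
    have h1 : ⟪ε - ε', α⟫_ℝ = 0 := by rw [inner_sub_left, hoε, hoε']; ring
    rw [hδexp, sum_inner] at h1
    have h2 : ∑ γ ∈ B.Δ, ⟪(d γ : ℝ) • γ, α⟫_ℝ = (d β : ℝ) * ⟪β, α⟫_ℝ := by
      rw [Finset.sum_eq_single β]
      · rw [real_inner_smul_left]
      · intro γ hγΔ hγβ
        rw [real_inner_smul_left]
        rcases eq_or_ne γ α with rfl | hγα
        · rw [hdα]; simp
        · rw [horth γ hγΔ hγα hγβ]; ring
      · intro h; exact absurd hβΔ h
    rw [h2] at h1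
    have hβαs : ⟪β, α⟫_ℝ ≠ 0 := by rwa [real_inner_comm] at hαβ
    have : (d β : ℝ) = 0 := by
      rcases mul_eq_zero.mp h1 with h | h
      · exact h
      · exact absurd h hβαs
    exact_mod_cast this
  have hδne : ε - ε' ≠ 0 := by
    intro h
    apply h0
    intro γ hγ
    have := B.coeffs_zero (hδexp ▸ h : ∑ γ ∈ B.Δ, (d γ : ℝ) • γ = 0) γ hγ
    have : d γ = 0 := by exact_mod_cast this
    simp only [hd] at this
    omega
  have hpos : 0 < ⟪ε - ε', ε - ε'⟫_ℝ :=
    lt_of_le_of_ne real_inner_self_nonneg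
      (Ne.symm fun hc => hδne (inner_self_eq_zero.mp hc))
  have hsum2 : ⟪ε - ε', ε - ε'⟫_ℝ = ∑ γ ∈ B.Δ, (d γ : ℝ) * ⟪γ, ε - ε'⟫_ℝ := by
    nth_rewrite 1 [hδexp]
    rw [sum_inner]
    exact Finset.sum_congr rfl fun γ hγ => real_inner_smul_left _ _ _
  have hexists : ∃ γ ∈ B.Δ, 0 < (d γ : ℝ) * ⟪γ, ε - ε'⟫_ℝ := by
    by_contra h
    push_neg at h
    have := Finset.sum_nonpos h
    rw [← hsum2] at this
    linarith
  obtain ⟨γ, hγΔ, hγpos⟩ := hexists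
  have hdγ : d γ ≠ 0 := by
    intro h
    rw [h] at hγpos; simp at hγpos
  have hγα : γ ≠ α := fun h => hdγ (h ▸ hdα)
  have hγβ : γ ≠ β := fun h => hdγ (h ▸ hdβ)
  have hγort : ⟪γ, α⟫_ℝ = 0 := horth γ hγΔ hγα hγβ
  have hγS : γ ∈ {γ : E | γ ∈ B.Δ ∧ ⟪γ, α⟫_ℝ = 0} := ⟨hγΔ, hγort⟩
  have hγΦ : γ ∈ Φ := B.subset hγΔ
  have hγγ := hΦ.norm_two γ hγΦ
  obtain ⟨hne1, hne2⟩ := root_ne_simple B hε hγΔ hα hγα hcε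
  obtain ⟨hne1', hne2'⟩ := root_ne_simple B hε' hγΔ hα hγα hcε'
  obtain ⟨m, hm, hm1, hm2⟩ := cartan_bound hΦ hγΦ hε hne1 hne2
  obtain ⟨m', hm', hm1', hm2'⟩ := cartan_bound hΦ hγΦ hε' hne1' hne2'
  have hinner : ⟪γ, ε - ε'⟫_ℝ = ((m : ℝ) - m') := by
    rw [inner_sub_right, real_inner_comm ε γ, real_inner_comm ε' γ, hm, hm']
  -- helper : invariants after a reflection ζ ↦ ζ - k•γ
  have hrefl : ∀ ζ ∈ Φ, ∀ k : ℤ, ⟪ζ, γ⟫_ℝ = (k : ℝ) → B.coeff ζ α = 1 → ⟪ζ, α⟫_ℝ = 0 →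
      (ζ - (k:ℝ) • γ ∈ Φ ∧ B.coeff (ζ - (k:ℝ) • γ) α = 1 ∧ ⟪ζ - (k:ℝ) • γ, α⟫_ℝ = 0 ∧
        (∀ x ∈ B.Δ, x ≠ γ → B.coeff (ζ - (k:ℝ) • γ) x = B.coeff ζ x) ∧
        B.coeff (ζ - (k:ℝ) • γ) γ = B.coeff ζ γ - k) := by
    intro ζ hζ k hk hcζ hoζ
    obtain ⟨hmem, hco⟩ := coeff_reflect hΦ B hζ hγΔ k hk
    refine ⟨hmem, ?_, ?_, ?_, ?_⟩
    · rw [hco α hα, if_neg (fun h => hγα h.symm)]; omega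
    · rw [inner_sub_left, real_inner_smul_left, hγort, hoζ]; ring
    · intro x hx hxγ
      rw [hco x hx, if_neg hxγ]; omega
    · rw [hco γ hγΔ, if_pos rfl]
  rcases mul_pos_iff.mp hγpos with ⟨ha, hb⟩ | ⟨ha, hb⟩
  · -- d γ > 0 and ⟪γ, ε - ε'⟫ > 0, so m' < m
    have hdγpos : 0 < d γ := by exact_mod_cast ha
    have hmm : m' < m := by
      rw [hinner] at hb
      have : (m' : ℝ) < m := by linarith
      exact_mod_cast this
    by_cases hm1e : m = 1
    · -- reflect ε : ε₁ = ε - γ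
      have hkε : ⟪ε, γ⟫_ℝ = ((1:ℤ) : ℝ) := by rw [hm, hm1e]
      obtain ⟨hmem, hc1, ho1, hoffc, hcg⟩ := hrefl ε hε 1 hkε hcε hoε
      have hlt : (∑ x ∈ B.Δ, (B.coeff (ε - ((1:ℤ):ℝ) • γ) x - B.coeff ε' x).natAbs) < n := by
        rw [← hsum]
        refine sum_natAbs_lt hγΔ _ _ (fun x hx hxγ => by rw [hoffc x hx hxγ]) ?_
        rw [hcg]
        simp only [hd] at hdγpos ⊢
        omega
      obtain ⟨w, hwmem, hw⟩ := IH _ hlt _ ε' hmem hε' hc1 hcε' ho1 hoε' rfl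
      refine ⟨w * sRefl γ, mul_mem hwmem (sRefl_mem_genBy hγS), ?_⟩
      have hsr : sRefl γ ε = ε - ((1:ℤ):ℝ) • γ := by rw [sRefl]; simp only [hkε]
      show w (sRefl γ ε) = ε'
      rw [hsr, hw]
    · -- then m' = -1 : reflect ε' : ε'₁ = ε' + γ
      have hm'e : m' = -1 := by omega
      have hkε' : ⟪ε', γ⟫_ℝ = ((-1:ℤ) : ℝ) := by rw [hm', hm'e]
      obtain ⟨hmem, hc1, ho1, hoffc, hcg⟩ := hrefl ε' hε' (-1) hkε' hcε' hoε'
      have hlt : (∑ x ∈ B.Δ, (B.coeff ε x - B.coeff (ε' - ((-1:ℤ):ℝ) • γ) x).natAbs) < n := by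
        rw [← hsum]
        refine sum_natAbs_lt hγΔ _ _ (fun x hx hxγ => by rw [hoffc x hx hxγ]) ?_
        rw [hcg]
        simp only [hd] at hdγpos ⊢
        omega
      obtain ⟨w, hwmem, hw⟩ := IH _ hlt ε _ hε hmem hcε hc1 hoε ho1 rfl
      refine ⟨sRefl γ * w, mul_mem (sRefl_mem_genBy hγS) hwmem, ?_⟩
      have hsr : sRefl γ ε' = ε' - ((-1:ℤ):ℝ) • γ := by rw [sRefl]; simp only [hkε']
      show sRefl γ (w ε) = ε'
      rw [hw, ← hsr, sRefl_invol hγγ]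
  · -- d γ < 0 and ⟪γ, ε - ε'⟫ < 0, so m < m'
    have hdγneg : d γ < 0 := by exact_mod_cast ha
    have hmm : m < m' := by
      rw [hinner] at hb
      have : (m : ℝ) < m' := by linarith
      exact_mod_cast this
    by_cases hm1e : m' = 1
    · -- reflect ε' : ε'₁ = ε' - γ
      have hkε' : ⟪ε', γ⟫_ℝ = ((1:ℤ) : ℝ) := by rw [hm', hm1e]
      obtain ⟨hmem, hc1, ho1, hoffc, hcg⟩ := hrefl ε' hε' 1 hkε' hcε' hoε'
      have hlt : (∑ x ∈ B.Δ, (B.coeff ε x - B.coeff (ε' - ((1:ℤ):ℝ) • γ) x).natAbs) < n := by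
        rw [← hsum]
        refine sum_natAbs_lt hγΔ _ _ (fun x hx hxγ => by rw [hoffc x hx hxγ]) ?_
        rw [hcg]
        simp only [hd] at hdγneg ⊢
        omega
      obtain ⟨w, hwmem, hw⟩ := IH _ hlt ε _ hε hmem hcε hc1 hoε ho1 rfl
      refine ⟨sRefl γ * w, mul_mem (sRefl_mem_genBy hγS) hwmem, ?_⟩
      have hsr : sRefl γ ε' = ε' - ((1:ℤ):ℝ) • γ := by rw [sRefl]; simp only [hkε']
      show sRefl γ (w ε) = ε'
      rw [hw, ← hsr, sRefl_invol hγγ]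
    · -- then m = -1 : reflect ε : ε₁ = ε + γ
      have hme : m = -1 := by omega
      have hkε : ⟪ε, γ⟫_ℝ = ((-1:ℤ) : ℝ) := by rw [hm, hme]
      obtain ⟨hmem, hc1, ho1, hoffc, hcg⟩ := hrefl ε hε (-1) hkε hcε hoε
      have hlt : (∑ x ∈ B.Δ, (B.coeff (ε - ((-1:ℤ):ℝ) • γ) x - B.coeff ε' x).natAbs) < n := by
        rw [← hsum]
        refine sum_natAbs_lt hγΔ _ _ (fun x hx hxγ => by rw [hoffc x hx hxγ]) ?_
        rw [hcg]
        simp only [hd] at hdγneg ⊢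
        omega
      obtain ⟨w, hwmem, hw⟩ := IH _ hlt _ ε' hmem hε' hc1 hcε' ho1 hoε' rfl
      refine ⟨w * sRefl γ, mul_mem hwmem (sRefl_mem_genBy hγS), ?_⟩
      have hsr : sRefl γ ε = ε - ((-1:ℤ):ℝ) • γ := by rw [sRefl]; simp only [hkε]
      show w (sRefl γ ε) = ε'
      rw [hsr, hw]


/-- For an extreme quasi-abelian simple root `α` (abelian or Heisenberg), the subgroup of the
Weyl group generated by the simple reflections in the simple roots orthogonal to `α`
acts transitively on `Φ_α = {ε ∈ Φ : c_α(ε) = 1, ⟪ε, α⟫ = 0}`. -/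
theorem levi_M_transitive_on_PhiSet
    (hΦ : IsRootSystem Φ) (hirr : IsIrreducible Φ) (B : Base Φ)
    {θ : E} (hθ : IsHighest B θ)
    {α β : E} (hα : α ∈ B.Δ) (hext : IsExtreme B α β)
    (hqa : B.coeff θ α = 1 ∨ IsHeisenberg B θ α)
    {ε ε' : E} (hε : ε ∈ PhiSet B α) (hε' : ε' ∈ PhiSet B α) :
    ∃ w ∈ genBy {γ : E | γ ∈ B.Δ ∧ ⟪γ, α⟫_ℝ = 0}, w ε = ε' := by
  obtain ⟨hεΦ, hεc, hεo⟩ := hε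
  obtain ⟨hε'Φ, hε'c, hε'o⟩ := hε'
  exact main_induction hΦ B hα hext _ ε ε' hεΦ hε'Φ hεc hε'c hεo hε'o rfl

end PaperRS
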